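/- arXiv:2002.02148 — 3 statements merged into one kernel-verified Lean document; each statement's English description precedes it below -/
import Mathlib

section
/- Closed-form evaluation of the diagonal sum of ĉ_o: for every integer m ≥ 0, ∑_{i=0}^{m} ĉ_o(i, m−i; s) = [(s;t)_m (s²a²c²/t³;t)_m (−c/d;t)_m (sab/t;t)_m / ((s²abcd/t²;t)_m (s²a²c²/t³;t²)_m (t;t)_m)] · d^m · ∑_{k=0}^{m} [(t^{−m};t)_k (−a/b;t)_k (scd/t;t)_k (−t^{−m+2}/(sac);t)_k / ((t;t)_k (−sac/t;t)_k (−t^{−m+1}d/c;t)_k (t^{−m+2}/(sab);t)_k)] t^k, as an identity of rational functions in a, b, c, d, t, s (the inner sum is the terminating basic hypergeometric series ₄φ₃[t^{−m}, −a/b, scd/t, −t^{−m+2}/sac; −t^{−m+1}d/c, −sac/t, t^{−m+2}/sab; t, t]). -/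
/-!
Closed-form evaluation of the diagonal sum of `ĉ_o` as a terminating ₄φ₃
series, as an identity in the rational function field ℚ(a,b,c,d,t,s).
-/

open Finset

noncomputable section

/-- The rational function field ℚ(a,b,c,d,t,s). -/
abbrev RF : Type := FractionRing (MvPolynomial (Fin 6) ℚ)

def gen (i : Fin 6) : RF := algebraMap (MvPolynomial (Fin 6) ℚ) RF (MvPolynomial.X i)

def a : RF := gen 0
def b : RF := gen 1
def c : RF := gen 2
def d : RF := gen 3
def t : RF := gen 4
def s : RF := gen 5

/-- The q-Pochhammer symbol (z;q)_k. -/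
def qPoch (z q : RF) (k : ℕ) : RF := ∏ j ∈ Finset.range k, (1 - z * q ^ j)

/-- `ĉ_o(i,j;s)`. -/
def co (S : RF) (i j : ℕ) : RF :=
  ((qPoch (-(a/b)) t i * qPoch (S*c*d/t) t i) / (qPoch t t i * qPoch (-(S*a*c/t)) t i)) *
  ((qPoch S t (i+j) * qPoch (-(S*a*c/t)) t (i+j) * qPoch (S^2*a^2*c^2/t^3) t (i+j)) /
    (qPoch (S^2*a*b*c*d/t^2) t (i+j) * qPoch (S^2*a^2*c^2/t^3) (t^2) (i+j))) *
  ((qPoch (-(c/d)) t j * qPoch (S*a*b/t) t j) / (qPoch t t j * qPoch (-(S*a*c/t)) t j)) *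
  b ^ i * d ^ j

lemma am_inj : Function.Injective (algebraMap (MvPolynomial (Fin 6) ℚ) RF) :=
  IsFractionRing.injective _ _

lemma poly_ne_of_eval (p : MvPolynomial (Fin 6) ℚ) (v : Fin 6 → ℚ)
    (h : MvPolynomial.eval v p ≠ 0) : p ≠ 0 := by
  intro h0; apply h; rw [h0]; simp

lemma am_ne_zero (p : MvPolynomial (Fin 6) ℚ) (h : p ≠ 0) :
    algebraMap (MvPolynomial (Fin 6) ℚ) RF p ≠ 0 := by
  intro h0
  exact h (am_inj (by simpa using h0))

lemma gen_ne (i : Fin 6) : gen i ≠ 0 :=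
  am_ne_zero _ (MvPolynomial.X_ne_zero i)

lemma ht : t ≠ 0 := gen_ne 4
lemma ha : a ≠ 0 := gen_ne 0
lemma hb : b ≠ 0 := gen_ne 1
lemma hc : c ≠ 0 := gen_ne 2
lemma hd : d ≠ 0 := gen_ne 3
lemma hs : s ≠ 0 := gen_ne 5

lemma rf_factor_ne (x y : RF) (p : MvPolynomial (Fin 6) ℚ)
    (hmul : x * y = algebraMap (MvPolynomial (Fin 6) ℚ) RF p)
    (v : Fin 6 → ℚ) (hp : MvPolynomial.eval v p ≠ 0) : x ≠ 0 := by
  intro h0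
  rw [h0, zero_mul] at hmul
  exact poly_ne_of_eval p v hp (am_inj (by simpa using hmul.symm))

lemma qPoch_ne_zero (z q : RF) (K : ℕ) (h : ∀ j, (1:RF) - z * q ^ j ≠ 0) :
    qPoch z q K ≠ 0 :=
  Finset.prod_ne_zero_iff.mpr fun j _ => h j

lemma N1 (K : ℕ) : qPoch t t K ≠ 0 := by
  refine qPoch_ne_zero _ _ _ fun j => ?_
  refine rf_factor_ne _ 1 (1 - MvPolynomial.X 4 ^ (j+1)) ?_ (fun _ => 2) ?_
  · rw [mul_one]
    simp only [t, gen, ← map_pow, ← map_one (algebraMap (MvPolynomial (Fin 6) ℚ) RF), ← map_mul,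
      ← map_sub]
    rw [← pow_succ']
  · have h2 : (1:ℚ) < 2 ^ (j+1) := one_lt_pow₀ (by norm_num) (by omega)
    simp only [map_sub, map_pow, MvPolynomial.eval_X, map_one]
    intro hh; rw [sub_eq_zero] at hh; exact absurd hh.symm (ne_of_gt h2)

lemma N2 (K : ℕ) : qPoch (-(s*a*c/t)) t K ≠ 0 := by
  refine qPoch_ne_zero _ _ _ fun j => ?_
  refine rf_factor_ne _ t (MvPolynomial.X 4 + MvPolynomial.X 5 * MvPolynomial.X 0 * MvPolynomial.X 2 * MvPolynomial.X 4 ^ j) ?_ (fun _ => 1) ?_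
  · have e1 : ((1:RF) - -(s*a*c/t)*t^j) * t = t + s*a*c*t^j := by
      field_simp [ht]; ring
    rw [e1]
    simp only [a, c, s, t, gen, ← map_pow, ← map_mul, ← map_add]
  · simp

lemma N3 (K : ℕ) : qPoch (-(c/d)) t K ≠ 0 := by
  refine qPoch_ne_zero _ _ _ fun j => ?_
  refine rf_factor_ne _ d (MvPolynomial.X 3 + MvPolynomial.X 2 * MvPolynomial.X 4 ^ j) ?_ (fun _ => 1) ?_
  · have e1 : ((1:RF) - -(c/d)*t^j) * d = d + c*t^j := by
      field_simp [hd]; ring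
    rw [e1]
    simp only [c, d, t, gen, ← map_pow, ← map_mul, ← map_add]
  · simp

lemma N4 (K : ℕ) : qPoch (s*a*b/t) t K ≠ 0 := by
  refine qPoch_ne_zero _ _ _ fun j => ?_
  refine rf_factor_ne _ t (MvPolynomial.X 4 - MvPolynomial.X 5 * MvPolynomial.X 0 * MvPolynomial.X 1 * MvPolynomial.X 4 ^ j) ?_ ![1,1,1,1,1,2] ?_
  · have e1 : ((1:RF) - s*a*b/t*t^j) * t = t - s*a*b*t^j := by
      field_simp [ht]
    rw [e1]
    simp only [a, b, s, t, gen, ← map_pow, ← map_mul, ← map_sub]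
  · norm_num [show (![(1:ℚ),1,1,1,1,2]) 5 = 2 from rfl, show (![(1:ℚ),1,1,1,1,2]) 4 = 1 from rfl, show (![(1:ℚ),1,1,1,1,2]) 3 = 1 from rfl, show (![(1:ℚ),1,1,1,1,2]) 2 = 1 from rfl]

lemma N5 (K : ℕ) : qPoch (s^2*a*b*c*d/t^2) t K ≠ 0 := by
  refine qPoch_ne_zero _ _ _ fun j => ?_
  refine rf_factor_ne _ (t^2) (MvPolynomial.X 4 ^ 2 - MvPolynomial.X 5 ^ 2 * MvPolynomial.X 0 * MvPolynomial.X 1 * MvPolynomial.X 2 * MvPolynomial.X 3 * MvPolynomial.X 4 ^ j) ?_ ![1,1,1,1,1,2] ?_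
  · have e1 : ((1:RF) - s^2*a*b*c*d/t^2*t^j) * t^2 = t^2 - s^2*a*b*c*d*t^j := by
      field_simp [ht]
    rw [e1]
    simp only [a, b, c, d, s, t, gen, ← map_pow, ← map_mul, ← map_sub]
  · norm_num [show (![(1:ℚ),1,1,1,1,2]) 5 = 2 from rfl, show (![(1:ℚ),1,1,1,1,2]) 4 = 1 from rfl, show (![(1:ℚ),1,1,1,1,2]) 3 = 1 from rfl, show (![(1:ℚ),1,1,1,1,2]) 2 = 1 from rfl]

lemma N6 (K : ℕ) : qPoch (s^2*a^2*c^2/t^3) (t^2) K ≠ 0 := by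
  refine qPoch_ne_zero _ _ _ fun j => ?_
  refine rf_factor_ne _ (t^3) (MvPolynomial.X 4 ^ 3 - MvPolynomial.X 5 ^ 2 * MvPolynomial.X 0 ^ 2 * MvPolynomial.X 2 ^ 2 * (MvPolynomial.X 4 ^ 2) ^ j) ?_ ![1,1,1,1,1,2] ?_
  · have e1 : ((1:RF) - s^2*a^2*c^2/t^3*(t^2)^j) * t^3 = t^3 - s^2*a^2*c^2*(t^2)^j := by
      field_simp [ht]
    rw [e1]
    simp only [a, c, s, t, gen, ← map_pow, ← map_mul, ← map_sub]
  · norm_num [show (![(1:ℚ),1,1,1,1,2]) 5 = 2 from rfl, show (![(1:ℚ),1,1,1,1,2]) 4 = 1 from rfl, show (![(1:ℚ),1,1,1,1,2]) 3 = 1 from rfl, show (![(1:ℚ),1,1,1,1,2]) 2 = 1 from rfl]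

lemma qPoch_split (z q : RF) (n k : ℕ) :
    qPoch z q (n + k) = qPoch z q n * qPoch (z * q ^ n) q k := by
  unfold qPoch
  rw [Finset.prod_range_add]
  congr 1
  refine Finset.prod_congr rfl fun j _ => ?_
  rw [pow_add]
  ring

lemma qPoch_reverse (u : RF) (hu : u ≠ 0) (k : ℕ) :
    qPoch u t k = (-u) ^ k * t ^ (∑ j ∈ Finset.range k, j) *
      qPoch (t ^ (1 - (k:ℤ)) / u) t k := by
  unfold qPoch
  have step1 : ∏ j ∈ Finset.range k, ((1:RF) - t ^ (1 - (k:ℤ)) / u * t ^ j)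
      = ∏ j ∈ Finset.range k, ((1:RF) - t ^ (-(j:ℤ)) / u) := by
    rw [← Finset.prod_range_reflect]
    refine Finset.prod_congr rfl fun j hj => ?_
    have hj' : j < k := Finset.mem_range.mp hj
    congr 1
    rw [← zpow_natCast t (k - 1 - j), div_mul_eq_mul_div, ← zpow_add₀ ht,
      show (1 - (k:ℤ) + ((k - 1 - j : ℕ) : ℤ)) = -(j:ℤ) from by omega]
  rw [step1]
  have step2 : ((-u) ^ k * t ^ (∑ j ∈ Finset.range k, j)) *
      ∏ j ∈ Finset.range k, ((1:RF) - t ^ (-(j:ℤ)) / u)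
      = ∏ j ∈ Finset.range k, ((-u) * t ^ j * ((1:RF) - t ^ (-(j:ℤ)) / u)) := by
    rw [Finset.prod_mul_distrib, Finset.prod_mul_distrib, Finset.prod_const,
      Finset.card_range, ← Finset.prod_pow_eq_pow_sum]
  rw [step2]
  refine Finset.prod_congr rfl fun j _ => ?_
  have hz : t ^ (-(j:ℤ)) = (t ^ j)⁻¹ := by
    rw [zpow_neg, zpow_natCast]
  rw [hz]
  field_simp [ht]
  ring

lemma qPoch_key (z : RF) (hz : z ≠ 0) (n k : ℕ) :
    qPoch z t (n + k) =
      qPoch z t n * ((-(z * t ^ n)) ^ k * t ^ (∑ j ∈ Finset.range k, j)) *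
        qPoch (t ^ (1 - ((n + k : ℕ) : ℤ)) / z) t k := by
  rw [qPoch_split, qPoch_reverse (z * t ^ n) (mul_ne_zero hz (pow_ne_zero n ht))]
  have harg : t ^ (1 - (k:ℤ)) / (z * t ^ n) = t ^ (1 - ((n + k : ℕ) : ℤ)) / z := by
    rw [← zpow_natCast t n, div_mul_eq_div_div, div_right_comm, ← zpow_sub₀ ht]
    congr 1
    push_cast
    ring
  rw [harg]
  ring

set_option maxHeartbeats 4000000 in
set_option maxRecDepth 4000 in
lemma term_eq (n k : ℕ) :
    co s k n =
    ((qPoch s t (n+k) * qPoch (s^2*a^2*c^2/t^3) t (n+k) * qPoch (-(c/d)) t (n+k) *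
        qPoch (s*a*b/t) t (n+k)) /
      (qPoch (s^2*a*b*c*d/t^2) t (n+k) * qPoch (s^2*a^2*c^2/t^3) (t^2) (n+k) *
        qPoch t t (n+k))) * d ^ (n+k) *
    (((qPoch (t ^ (-((n+k : ℕ):ℤ))) t k * qPoch (-(a/b)) t k * qPoch (s*c*d/t) t k *
          qPoch (-(t ^ (2 - ((n+k : ℕ):ℤ)) / (s*a*c))) t k) /
        (qPoch t t k * qPoch (-(s*a*c/t)) t k * qPoch (-(t ^ (1 - ((n+k : ℕ):ℤ)) * d / c)) t k *
          qPoch (t ^ (2 - ((n+k : ℕ):ℤ)) / (s*a*b)) t k)) * t ^ k) := by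
  have et : t ^ (2 - ((n+k : ℕ):ℤ)) = t ^ (1 - ((n+k : ℕ):ℤ)) * t := by
    rw [← zpow_add_one₀ ht]; congr 1; ring
  have e1 : t ^ (-((n+k : ℕ):ℤ)) = t ^ (1 - ((n+k : ℕ):ℤ)) / t := by
    rw [eq_div_iff ht, ← zpow_add_one₀ ht]; congr 1; ring
  have e2 : -(t ^ (2 - ((n+k : ℕ):ℤ)) / (s*a*c)) = t ^ (1 - ((n+k : ℕ):ℤ)) / (-(s*a*c/t)) := by
    rw [et]; field_simp
  have e3 : -(t ^ (1 - ((n+k : ℕ):ℤ)) * d / c) = t ^ (1 - ((n+k : ℕ):ℤ)) / (-(c/d)) := by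
    field_simp
  have e4 : t ^ (2 - ((n+k : ℕ):ℤ)) / (s*a*b) = t ^ (1 - ((n+k : ℕ):ℤ)) / (s*a*b/t) := by
    rw [et]; field_simp
  have tS : t ^ (∑ j ∈ Finset.range k, j) ≠ 0 := pow_ne_zero _ ht
  have hz1 : qPoch (t ^ (1 - ((n+k : ℕ):ℤ)) / t) t k
      = qPoch t t (n+k) / (qPoch t t n * ((-(t * t ^ n)) ^ k * t ^ (∑ j ∈ Finset.range k, j))) := by
    rw [eq_div_iff (mul_ne_zero (N1 n) (mul_ne_zero
      (pow_ne_zero _ (neg_ne_zero.mpr (mul_ne_zero ht (pow_ne_zero _ ht)))) tS))]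
    linear_combination (qPoch_key t ht n k).symm
  have hz2 : qPoch (t ^ (1 - ((n+k : ℕ):ℤ)) / (-(s*a*c/t))) t k
      = qPoch (-(s*a*c/t)) t (n+k) / (qPoch (-(s*a*c/t)) t n *
          ((-(-(s*a*c/t) * t ^ n)) ^ k * t ^ (∑ j ∈ Finset.range k, j))) := by
    have hz : -(s*a*c/t) ≠ 0 := neg_ne_zero.mpr (div_ne_zero (mul_ne_zero (mul_ne_zero hs ha) hc) ht)
    rw [eq_div_iff (mul_ne_zero (N2 n) (mul_ne_zero
      (pow_ne_zero _ (neg_ne_zero.mpr (mul_ne_zero hz (pow_ne_zero _ ht)))) tS))]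
    linear_combination (qPoch_key (-(s*a*c/t)) hz n k).symm
  have hz3 : qPoch (t ^ (1 - ((n+k : ℕ):ℤ)) / (-(c/d))) t k
      = qPoch (-(c/d)) t (n+k) / (qPoch (-(c/d)) t n *
          ((-(-(c/d) * t ^ n)) ^ k * t ^ (∑ j ∈ Finset.range k, j))) := by
    have hz : -(c/d) ≠ 0 := neg_ne_zero.mpr (div_ne_zero hc hd)
    rw [eq_div_iff (mul_ne_zero (N3 n) (mul_ne_zero
      (pow_ne_zero _ (neg_ne_zero.mpr (mul_ne_zero hz (pow_ne_zero _ ht)))) tS))]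
    linear_combination (qPoch_key (-(c/d)) hz n k).symm
  have hz4 : qPoch (t ^ (1 - ((n+k : ℕ):ℤ)) / (s*a*b/t)) t k
      = qPoch (s*a*b/t) t (n+k) / (qPoch (s*a*b/t) t n *
          ((-(s*a*b/t * t ^ n)) ^ k * t ^ (∑ j ∈ Finset.range k, j))) := by
    have hz : s*a*b/t ≠ 0 := div_ne_zero (mul_ne_zero (mul_ne_zero hs ha) hb) ht
    rw [eq_div_iff (mul_ne_zero (N4 n) (mul_ne_zero
      (pow_ne_zero _ (neg_ne_zero.mpr (mul_ne_zero hz (pow_ne_zero _ ht)))) tS))]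
    linear_combination (qPoch_key (s*a*b/t) hz n k).symm
  rw [e1, e2, e3, e4, hz1, hz2, hz3, hz4]
  rw [show ((-(t * t ^ n) : RF)) ^ k = (-1 : RF) ^ k * (t * t ^ n) ^ k from by ring,
    show ((-(s*a*b/t * t ^ n) : RF)) ^ k = (-1 : RF) ^ k * (s*a*b/t * t ^ n) ^ k from by ring,
    show ((-(-(s*a*c/t) * t ^ n) : RF)) ^ k = (s*a*c/t * t ^ n) ^ k from by ring,
    show ((-(-(c/d) * t ^ n) : RF)) ^ k = (c/d * t ^ n) ^ k from by ring]
  unfold co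
  simp only [show k + n = n + k from Nat.add_comm k n]
  have hP3 := N1 k
  have hP4 := N2 k
  have hP8 := N5 (n+k)
  have hP9 := N6 (n+k)
  have hP10 := N3 n
  have hP11 := N4 n
  have hP12 := N1 n
  have hP13 := N2 n
  have hP14 := N3 (n+k)
  have hP15 := N4 (n+k)
  have hP16 := N1 (n+k)
  set P1 := qPoch (-(a/b)) t k with hs1
  set P2 := qPoch (s*c*d/t) t k with hs2
  set P3 := qPoch t t k with hs3
  set P4 := qPoch (-(s*a*c/t)) t k with hs4
  set P5 := qPoch s t (n+k) with hs5
  set P6 := qPoch (-(s*a*c/t)) t (n+k) with hs6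
  set P7 := qPoch (s^2*a^2*c^2/t^3) t (n+k) with hs7
  set P8 := qPoch (s^2*a*b*c*d/t^2) t (n+k) with hs8
  set P9 := qPoch (s^2*a^2*c^2/t^3) (t^2) (n+k) with hs9
  set P10 := qPoch (-(c/d)) t n with hs10
  set P11 := qPoch (s*a*b/t) t n with hs11
  set P12 := qPoch t t n with hs12
  set P13 := qPoch (-(s*a*c/t)) t n with hs13
  set P14 := qPoch (-(c/d)) t (n+k) with hs14
  set P15 := qPoch (s*a*b/t) t (n+k) with hs15
  set P16 := qPoch t t (n+k) with hs16
  set TS := t ^ (∑ j ∈ Finset.range k, j) with hTS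
  set u := ((-1 : RF))^k with hu'
  have hu : u ≠ 0 := by rw [hu']; exact pow_ne_zero _ (by norm_num)
  have hTSne : TS ≠ 0 := by rw [hTS]; exact pow_ne_zero _ ht
  field_simp [hP3, hP4, hP8, hP9, hP10, hP11, hP12, hP13, hP14, hP15, hP16,
    ht, ha, hb, hc, hd, hs, hu, hTSne]
  simp only [div_pow]
  field_simp
  have hdk : d ^ k * d⁻¹ ^ k = 1 := by rw [← mul_pow, mul_inv_cancel₀ hd, one_pow]
  linear_combination (-(P1 * P2 * P5 * P6 * P7 * b ^ k * d ^ n * t ^ k * t ^ (k * n * 2) * s ^ k *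
    a ^ k * c ^ k * t⁻¹ ^ k)) * hdk

/-- `∑_{i=0}^m ĉ_o(i,m−i;s)` equals the prefactor times the terminating
`₄φ₃[t^{−m}, −a/b, scd/t, −t^{−m+2}/sac; −t^{−m+1}d/c, −sac/t, t^{−m+2}/sab; t, t]`. -/
theorem diagonal_sum_closed_form (m : ℕ) :
    ∑ i ∈ Finset.range (m+1), co s i (m - i) =
    ((qPoch s t m * qPoch (s^2*a^2*c^2/t^3) t m * qPoch (-(c/d)) t m * qPoch (s*a*b/t) t m) /
      (qPoch (s^2*a*b*c*d/t^2) t m * qPoch (s^2*a^2*c^2/t^3) (t^2) m * qPoch t t m)) * d ^ m *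
    ∑ k ∈ Finset.range (m+1),
      ((qPoch (t ^ (-(m:ℤ))) t k * qPoch (-(a/b)) t k * qPoch (s*c*d/t) t k *
          qPoch (-(t ^ (2 - (m:ℤ)) / (s*a*c))) t k) /
        (qPoch t t k * qPoch (-(s*a*c/t)) t k * qPoch (-(t ^ (1 - (m:ℤ)) * d / c)) t k *
          qPoch (t ^ (2 - (m:ℤ)) / (s*a*b)) t k)) * t ^ k := by
  rw [Finset.mul_sum]
  refine Finset.sum_congr rfl fun i hi => ?_
  have hi' : i ≤ m := Nat.lt_succ_iff.mp (Finset.mem_range.mp hi)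
  obtain ⟨n, rfl⟩ : ∃ n, m = n + i := ⟨m - i, by omega⟩
  rw [show n + i - i = n from by omega]
  exact term_eq n i

end
end

section
/- Expansion of E_r in BC_n monomial symmetric functions: let x₁, …, x_n be invertible elements of a commutative ring (or nonzero elements of a field), let y be an indeterminate, and define E_r = E_r(x) for 0 ≤ r ≤ 2n by ∏_{i=1}^{n} (1 − y x_i)(1 − y x_i^{−1}) = ∑_{r=0}^{2n} (−1)^r E_r y^r. Define the monomial symmetric Laurent polynomial m_{(1^r)}(x) := ∑_{S ⊆ {1,…,n}, |S| = r} ∑_{ε : S → {±1}} ∏_{i ∈ S} x_i^{ε(i)} for 0 ≤ r ≤ n (with m_{(1^0)} = 1). Then for every 0 ≤ r ≤ n, E_r(x) = ∑_{k=0}^{⌊r/2⌋} binom(n−r+2k, k) · m_{(1^{r−2k})}(x), where binom denotes the ordinary binomial coefficient. -/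
/-!
Expansion of the elementary generating-function coefficients `E_r(x)` in the
type `BC_n` monomial symmetric Laurent polynomials `m_{(1^{r−2k})}(x)`.
-/

open Finset

lemma coeff_prod_one_sub' {K : Type*} [CommRing K] {ι : Type*} [DecidableEq ι]
    (s : Finset ι) (a : ι → K) :
    ∀ r : ℕ, (∏ i ∈ s, (1 - Polynomial.C (a i) * Polynomial.X)).coeff r
      = (-1 : K)^r * ∑ T ∈ s.powersetCard r, ∏ i ∈ T, a i := by
  induction s using Finset.induction with
  | empty =>
    intro r
    cases r with
    | zero => simp
    | succ m => simp [show (Finset.powersetCard (m+1) (∅ : Finset ι)) = ∅ from rfl,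
        Polynomial.coeff_one]
  | insert c s hns ih =>
    intro r
    rw [Finset.prod_insert hns]
    have expand : (1 - Polynomial.C (a c) * Polynomial.X) *
        (∏ i ∈ s, (1 - Polynomial.C (a i) * Polynomial.X)) =
        (∏ i ∈ s, (1 - Polynomial.C (a i) * Polynomial.X)) -
        Polynomial.C (a c) * (Polynomial.X * ∏ i ∈ s, (1 - Polynomial.C (a i) * Polynomial.X)) := by
      ring
    rw [expand]
    cases r with
    | zero =>
      simp [ih 0]
    | succ m =>
      rw [Polynomial.coeff_sub, Polynomial.coeff_C_mul, Polynomial.coeff_X_mul, ih, ih,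
        Finset.powersetCard_succ_insert hns]
      rw [Finset.sum_union, Finset.sum_image]
      · have : ∀ T ∈ s.powersetCard m, ∏ i ∈ insert c T, a i = a c * ∏ i ∈ T, a i := by
          intro T hT
          rw [Finset.mem_powersetCard] at hT
          rw [Finset.prod_insert (fun hc => hns (hT.1 hc))]
        rw [Finset.sum_congr rfl this, ← Finset.mul_sum]
        ring
      · intro T hT U hU hTU
        rw [Finset.mem_coe, Finset.mem_powersetCard] at hT hU
        have key : ∀ V : Finset ι, V ⊆ s → (insert c V).erase c = V := by
          intro V hV
          rw [Finset.erase_insert_eq_erase, Finset.erase_eq_self.2 (fun hc => hns (hV hc))]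
        rw [← key T hT.1, ← key U hU.1, hTU]
      · rw [Finset.disjoint_left]
        intro T hT hT'
        rw [Finset.mem_powersetCard] at hT
        simp only [Finset.mem_image] at hT'
        obtain ⟨U, hU, rfl⟩ := hT'
        exact hns (hT.1 (Finset.mem_insert_self c U))


/-- If `E_r` is defined by `∏_{i=1}^n (1−y x_i)(1−y/x_i) = ∑_r (−1)^r E_r y^r`
(i.e. `E_r = (−1)^r` times the `r`-th coefficient of the product polynomial in `y`),
and `m_r = m_{(1^r)}(x)` is the sum of all monomials `∏_{i∈S} x_i^{±1}` over
`r`-element subsets `S` and sign choices, then for `0 ≤ r ≤ n`: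
`E_r = ∑_{k=0}^{⌊r/2⌋} binom(n−r+2k, k) m_{r−2k}`. -/
theorem E_expansion_in_monomials {K : Type*} [Field K] (n : ℕ) (x : Fin n → K)
    (hx : ∀ i, x i ≠ 0)
    (E : ℕ → K)
    (hE : ∀ r : ℕ,
      E r = (-1 : K)^r *
        (∏ i : Fin n,
          ((1 - Polynomial.C (x i) * Polynomial.X) *
           (1 - Polynomial.C (x i)⁻¹ * Polynomial.X))).coeff r)
    (m : ℕ → K)
    (hm : ∀ r : ℕ,
      m r = ∑ S ∈ Finset.powersetCard r (Finset.univ : Finset (Fin n)),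
              ∑ T ∈ S.powerset, (∏ i ∈ T, x i) * ∏ i ∈ S \ T, (x i)⁻¹) :
    ∀ r : ℕ, r ≤ n →
      E r = ∑ k ∈ Finset.range (r/2 + 1), (Nat.choose (n - r + 2*k) k : K) * m (r - 2*k) := by
  intro r hr
  -- Step 1: E r as a sum over pairs (A, B) of subsets with |A| + |B| = r
  have step1 : E r = ∑ q ∈ (Finset.HasAntidiagonal.antidiagonal r).sigma
      (fun p => ((Finset.univ : Finset (Fin n)).powersetCard p.1) ×ˢ
        ((Finset.univ : Finset (Fin n)).powersetCard p.2)),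
      (∏ i ∈ q.2.1, x i) * ∏ i ∈ q.2.2, (x i)⁻¹ := by
    rw [hE r, Finset.prod_mul_distrib, Polynomial.coeff_mul]
    rw [Finset.sum_sigma]
    have : ∀ p ∈ Finset.HasAntidiagonal.antidiagonal r,
        (∏ i : Fin n, (1 - Polynomial.C (x i) * Polynomial.X)).coeff p.1 *
        (∏ i : Fin n, (1 - Polynomial.C (x i)⁻¹ * Polynomial.X)).coeff p.2
        = (-1 : K)^r * ∑ q ∈ ((Finset.univ : Finset (Fin n)).powersetCard p.1) ×ˢ
            ((Finset.univ : Finset (Fin n)).powersetCard p.2),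
            (∏ i ∈ q.1, x i) * ∏ i ∈ q.2, (x i)⁻¹ := by
      intro p hp
      rw [Finset.HasAntidiagonal.mem_antidiagonal] at hp
      rw [coeff_prod_one_sub' _ x, coeff_prod_one_sub' _ (fun i => (x i)⁻¹),
        Finset.sum_product]
      rw [show ∀ (u v a b : K), u * a * (v * b) = (u * v) * (a * b) from fun _ _ _ _ => by ring]
      rw [← pow_add, hp, Finset.sum_mul_sum]
    rw [Finset.sum_congr rfl this, ← Finset.mul_sum, ← mul_assoc, ← pow_add]
    rw [Even.neg_one_pow ⟨r, rfl⟩, one_mul]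
  -- Step 2: RHS as a sum over (k, S, T, C)
  have step2 : ∑ k ∈ Finset.range (r/2 + 1), (Nat.choose (n - r + 2*k) k : K) * m (r - 2*k)
      = ∑ q ∈ (Finset.range (r/2 + 1)).sigma
        (fun k => ((Finset.univ : Finset (Fin n)).powersetCard (r - 2*k)).sigma
          (fun S => S.powerset ×ˢ ((Finset.univ \ S).powersetCard k))),
        (∏ i ∈ q.2.2.1, x i) * ∏ i ∈ q.2.1 \ q.2.2.1, (x i)⁻¹ := by
    rw [Finset.sum_sigma]
    refine Finset.sum_congr rfl ?_
    intro k hk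
    rw [Finset.mem_range] at hk
    rw [Finset.sum_sigma, hm, Finset.mul_sum]
    refine Finset.sum_congr rfl ?_
    intro S hS
    rw [Finset.mem_powersetCard_univ] at hS
    rw [Finset.sum_product, Finset.mul_sum]
    refine Finset.sum_congr rfl ?_
    intro T hT
    dsimp only
    rw [Finset.sum_const]
    rw [Finset.card_powersetCard, Finset.card_sdiff_of_subset (Finset.subset_univ S),
      Finset.card_univ, Fintype.card_fin, hS]
    rw [nsmul_eq_mul, show n - (r - 2*k) = n - r + 2*k by omega]
  rw [step1, step2]
  -- Step 3: the bijection
  refine Finset.sum_nbij'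
    (fun q => ⟨(q.2.1 ∩ q.2.2).card,
      ⟨(q.2.1 \ q.2.2) ∪ (q.2.2 \ q.2.1), (q.2.1 \ q.2.2, q.2.1 ∩ q.2.2)⟩⟩)
    (fun q => ⟨((q.2.2.1 ∪ q.2.2.2).card, ((q.2.1 \ q.2.2.1) ∪ q.2.2.2).card),
      (q.2.2.1 ∪ q.2.2.2, (q.2.1 \ q.2.2.1) ∪ q.2.2.2)⟩)
    ?_ ?_ ?_ ?_ ?_
  · rintro ⟨⟨p1, p2⟩, A, B⟩ hq
    simp only [Finset.mem_sigma, Finset.HasAntidiagonal.mem_antidiagonal, Finset.mem_product,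
      Finset.mem_powersetCard_univ] at hq
    obtain ⟨hp, hA, hB⟩ := hq
    have c1 : (A \ B).card + (A ∩ B).card = A.card := Finset.card_sdiff_add_card_inter A B
    have c2 : (B \ A).card + (A ∩ B).card = B.card := by
      rw [Finset.inter_comm]; exact Finset.card_sdiff_add_card_inter B A
    have hdisj : Disjoint (A \ B) (B \ A) := disjoint_sdiff_sdiff
    have cU : ((A \ B) ∪ (B \ A)).card = (A \ B).card + (B \ A).card :=
      Finset.card_union_of_disjoint hdisj
    simp only [Finset.mem_sigma, Finset.mem_range, Finset.mem_powersetCard_univ,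
      Finset.mem_product, Finset.mem_powerset, Finset.mem_powersetCard]
    refine ⟨by omega, ⟨Finset.subset_univ _, by omega⟩, Finset.subset_union_left, ?_, trivial⟩
    intro i hi
    rw [Finset.mem_inter] at hi
    simp only [Finset.mem_sdiff, Finset.mem_union, Finset.mem_univ, true_and]
    tauto
  · rintro ⟨k, S, T, C⟩ hq
    simp only [Finset.mem_sigma, Finset.mem_range, Finset.mem_powersetCard_univ,
      Finset.mem_product, Finset.mem_powerset, Finset.mem_powersetCard] at hq
    obtain ⟨hk, hS, hT, hC, hCk⟩ := hq
    simp only [Finset.mem_sigma, Finset.HasAntidiagonal.mem_antidiagonal, Finset.mem_product,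
      Finset.mem_powersetCard_univ]
    have hTC : Disjoint T C := by
      rw [Finset.disjoint_left]
      intro i hiT hiC
      exact (Finset.mem_sdiff.1 (hC hiC)).2 (hT hiT)
    have hSTC : Disjoint (S \ T) C := by
      rw [Finset.disjoint_left]
      intro i hiT hiC
      exact (Finset.mem_sdiff.1 (hC hiC)).2 (Finset.mem_sdiff.1 hiT).1
    have e1 : (T ∪ C).card = T.card + C.card := Finset.card_union_of_disjoint hTC
    have e2 : ((S \ T) ∪ C).card = (S \ T).card + C.card := Finset.card_union_of_disjoint hSTC
    have e3 : (S \ T).card = S.card - T.card := Finset.card_sdiff_of_subset hT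
    have e4 : T.card ≤ S.card := Finset.card_le_card hT
    refine ⟨by omega, trivial, trivial⟩
  · rintro ⟨⟨p1, p2⟩, A, B⟩ hq
    simp only [Finset.mem_sigma, Finset.HasAntidiagonal.mem_antidiagonal, Finset.mem_product,
      Finset.mem_powersetCard_univ] at hq
    obtain ⟨hp, hA, hB⟩ := hq
    have h1 : (A \ B) ∪ (A ∩ B) = A := by
      ext i; simp only [Finset.mem_union, Finset.mem_sdiff, Finset.mem_inter]; tauto
    have h2 : (((A \ B) ∪ (B \ A)) \ (A \ B)) ∪ (A ∩ B) = B := by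
      ext i; simp only [Finset.mem_union, Finset.mem_sdiff, Finset.mem_inter]; tauto
    dsimp only
    rw [h1, h2, hA, hB]
  · rintro ⟨k, S, T, C⟩ hq
    simp only [Finset.mem_sigma, Finset.mem_range, Finset.mem_powersetCard_univ,
      Finset.mem_product, Finset.mem_powerset, Finset.mem_powersetCard] at hq
    obtain ⟨hk, hS, hT, hC, hCk⟩ := hq
    have h1 : ∀ i : Fin n, i ∈ T → i ∈ S := fun i h => hT h
    have h2 : ∀ i : Fin n, i ∈ C → i ∉ S := fun i h => (Finset.mem_sdiff.1 (hC h)).2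
    have e1 : (T ∪ C) ∩ ((S \ T) ∪ C) = C := by
      ext i
      simp only [Finset.mem_union, Finset.mem_sdiff, Finset.mem_inter]
      have := h1 i; have := h2 i; tauto
    have e2 : (T ∪ C) \ ((S \ T) ∪ C) = T := by
      ext i
      simp only [Finset.mem_union, Finset.mem_sdiff, Finset.mem_inter]
      have := h1 i; have := h2 i; tauto
    have e3 : ((S \ T) ∪ C) \ (T ∪ C) = S \ T := by
      ext i
      simp only [Finset.mem_union, Finset.mem_sdiff]
      have := h1 i; have := h2 i; tauto
    have e4 : T ∪ (S \ T) = S := by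
      ext i
      simp only [Finset.mem_union, Finset.mem_sdiff]
      have := h1 i; tauto
    dsimp only
    rw [e1, e2, e3, e4, hCk]
  · rintro ⟨⟨p1, p2⟩, A, B⟩ hq
    simp only [Finset.mem_sigma, Finset.HasAntidiagonal.mem_antidiagonal, Finset.mem_product,
      Finset.mem_powersetCard_univ] at hq
    obtain ⟨hp, hA, hB⟩ := hq
    dsimp only
    have hsub1 : A ∩ B ⊆ A := Finset.inter_subset_left
    have hsub2 : A ∩ B ⊆ B := Finset.inter_subset_right
    have d1 : ((A \ B) ∪ (B \ A)) \ (A \ B) = B \ A := by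
      ext i; simp only [Finset.mem_union, Finset.mem_sdiff]; tauto
    rw [d1]
    have pA : (∏ i ∈ A, x i) = (∏ i ∈ A \ B, x i) * ∏ i ∈ A ∩ B, x i := by
      rw [← Finset.prod_sdiff hsub1, Finset.sdiff_inter_self_left]
    have pB : (∏ i ∈ B, (x i)⁻¹) = (∏ i ∈ B \ A, (x i)⁻¹) * ∏ i ∈ A ∩ B, (x i)⁻¹ := by
      rw [← Finset.prod_sdiff hsub2]
      congr 1
      rw [show B \ (A ∩ B) = B \ A by
        ext i; simp only [Finset.mem_sdiff, Finset.mem_inter]; tauto]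
    rw [pA, pB]
    have cancel : (∏ i ∈ A ∩ B, x i) * ∏ i ∈ A ∩ B, (x i)⁻¹ = 1 := by
      rw [← Finset.prod_mul_distrib]
      refine Finset.prod_eq_one ?_
      intro i _
      exact mul_inv_cancel₀ (hx i)
    calc (∏ i ∈ A \ B, x i) * (∏ i ∈ A ∩ B, x i) *
          ((∏ i ∈ B \ A, (x i)⁻¹) * ∏ i ∈ A ∩ B, (x i)⁻¹)
        = ((∏ i ∈ A \ B, x i) * ∏ i ∈ B \ A, (x i)⁻¹) *
          ((∏ i ∈ A ∩ B, x i) * ∏ i ∈ A ∩ B, (x i)⁻¹) := by ring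
      _ = (∏ i ∈ A \ B, x i) * ∏ i ∈ B \ A, (x i)⁻¹ := by rw [cancel, mul_one]
end

section
/- Combinatorial solution of the recursion: let K be a field and a, b, c, d, t ∈ K generic (all denominators below nonzero), and let C = (C_{i,j}) be the unique family with C_{i,j} = 0 for i > j, C_{i,i} = 1, and C_{i,j} = C_{i−1,j−1} + g(t^i|a,b,c,d)·C_{i,j−1} + f(t^i|a,b,c,d)·C_{i+1,j−1} for i ≥ 0, j ≥ 1 (convention C_{−1,j} = 0), with C_{0,0} = 1. For integers m, n ≥ 0 and r ≥ 0, let 𝒫^{(r)}_{m,n} be the (finite) set of words X₁X₂⋯X_{m+n} in which each letter X_i is either an f-letter f(t^{r−d_i}) or a g-letter g(t^{r−d_i}) with d_i ∈ ℤ, subject to: (1) 0 ≤ d₁ ≤ r; (2) exactly m letters are f-letters and exactly n are g-letters; (3) for 1 ≤ i < m+n, if X_i is an f-letter then d_i − 1 ≤ d_{i+1} ≤ r, and if X_i is a g-letter then d_i ≤ d_{i+1} ≤ r. The weight of a word is the product of its letters, where f(s) := f(s|a,b,c,d) and g(s) := g(s|a,b,c,d). Then for all r, k ∈ ℤ_{≥0}: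 C_{r,r+2k} = ∑_{k₁+k₂=k, k₁,k₂ ≥ 0} ∑_{X ∈ 𝒫^{(r)}_{k₁, 2k₂}} weight(X), and C_{r,r+2k+1} = ∑_{k₁+k₂=k, k₁,k₂ ≥ 0} ∑_{X ∈ 𝒫^{(r)}_{k₁, 2k₂+1}} weight(X) (the empty word has weight 1). -/
/-!
Combinatorial solution of the recursion for the transition matrix `C`:
`C_{r,r+l}` is the sum of the weights of all admissible words of `f`- and
`g`-letters.
-/

open Finset

set_option maxHeartbeats 1000000

noncomputable section

/-- `f(s|a,b,c,d)` with parameter `t`. -/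
def fF {K : Type*} [Field K] (a b c d t s : K) : K :=
  ((1 - a*b*c*d*s/t) * (1 - t*s) * (1 - a*b*s) * (1 - a*c*s) * (1 - a*d*s) *
    (1 - b*c*s) * (1 - b*d*s) * (1 - c*d*s)) /
  ((1 - a*b*c*d*s^2/t) * (1 - a*b*c*d*s^2)^2 * (1 - a*b*c*d*t*s^2))

/-- `g₁(s|a,b,c,d)` with parameter `t`. -/
def g1F {K : Type*} [Field K] (a b c d t s : K) : K :=
  ((a + b + c + d - (a*b*c + a*b*d + a*c*d + b*c*d)*s/t) / (1 - a*b*c*d*s^2/t^2)) *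
    ((1 - s)/(1 - t))

/-- `g(s|a,b,c,d) = g₁(s|a,b,c,d) − g₁(st|a,b,c,d)`. -/
def gF {K : Type*} [Field K] (a b c d t s : K) : K :=
  g1F a b c d t s - g1F a b c d t (s*t)

/-- A letter is a pair `(isF, d)`: an `f`-letter `f(t^{r−d})` if `isF = true`,
or a `g`-letter `g(t^{r−d})` if `isF = false`; its value is the corresponding
rational function. -/
def letterVal {K : Type*} [Field K] (a b c d t : K) (r : ℕ) (X : Bool × ℤ) : K :=
  if X.1 then fF a b c d t (t ^ ((r:ℤ) - X.2)) else gF a b c d t (t ^ ((r:ℤ) - X.2))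

/-- The set `𝒫^{(r)}_{m,n}` of admissible words `X₁⋯X_{m+n}` with exactly `m`
`f`-letters and `n` `g`-letters: `0 ≤ d₁ ≤ r`; after an `f`-letter
`d_i − 1 ≤ d_{i+1} ≤ r`, and after a `g`-letter `d_i ≤ d_{i+1} ≤ r`. -/
def wordSet (r m n : ℕ) : Set (Fin (m+n) → Bool × ℤ) :=
  { w | (∀ h : 0 < m + n, 0 ≤ (w ⟨0, h⟩).2 ∧ (w ⟨0, h⟩).2 ≤ (r:ℤ)) ∧
        (Finset.univ.filter (fun i => (w i).1 = true)).card = m ∧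
        (Finset.univ.filter (fun i => (w i).1 = false)).card = n ∧
        (∀ (i : ℕ) (h : i + 1 < m + n),
          ((w ⟨i, by omega⟩).1 = true → (w ⟨i, by omega⟩).2 - 1 ≤ (w ⟨i+1, h⟩).2) ∧
          ((w ⟨i, by omega⟩).1 = false → (w ⟨i, by omega⟩).2 ≤ (w ⟨i+1, h⟩).2) ∧
          (w ⟨i+1, h⟩).2 ≤ (r:ℤ)) }

section AuxProof

lemma wordSet_bounds {r m n : ℕ} {w : Fin (m+n) → Bool × ℤ} (hw : w ∈ wordSet r m n) :
    ∀ (iv : ℕ) (h : iv < m + n), -(iv:ℤ) ≤ (w ⟨iv, h⟩).2 ∧ (w ⟨iv, h⟩).2 ≤ (r:ℤ) := by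
  obtain ⟨h1, _, _, h4⟩ := hw
  intro iv
  induction iv with
  | zero => intro h; have := h1 (by omega); constructor <;> [omega; exact this.2]
  | succ iv ih =>
    intro h
    have hiv : iv < m + n := by omega
    have := ih hiv
    obtain ⟨c1, c2, c3⟩ := h4 iv h
    refine ⟨?_, c3⟩
    rcases Bool.eq_false_or_eq_true (w ⟨iv, hiv⟩).1 with hb | hb
    · have := c1 hb; push_cast; omega
    · have := c2 hb; push_cast; omega

lemma wordSet_finite (r m n : ℕ) : (wordSet r m n).Finite := by
  have : wordSet r m n ⊆ Set.pi Set.univ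
      (fun _ : Fin (m+n) => (Set.univ : Set Bool) ×ˢ Set.Icc (-(m+n : ℤ)) (r:ℤ)) := by
    intro w hw i _
    refine ⟨Set.mem_univ _, ?_⟩
    have := wordSet_bounds hw i.val i.isLt
    rw [Fin.eta] at this
    have hi : (i.val : ℤ) ≤ (m+n : ℤ) := by exact_mod_cast le_of_lt (by exact_mod_cast i.isLt)
    constructor
    · have := this.1; omega
    · exact this.2
  exact Set.Finite.subset (Set.Finite.pi (fun _ => Set.finite_univ.prod (Set.finite_Icc _ _))) this


def shiftW {N : ℕ} (δ : ℤ) (w : Fin N → Bool × ℤ) : Fin N → Bool × ℤ :=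
  fun i => ((w i).1, (w i).2 + δ)

@[simp] lemma shiftW_fst {N : ℕ} (δ : ℤ) (w : Fin N → Bool × ℤ) (i : Fin N) :
    (shiftW δ w i).1 = (w i).1 := rfl
@[simp] lemma shiftW_snd {N : ℕ} (δ : ℤ) (w : Fin N → Bool × ℤ) (i : Fin N) :
    (shiftW δ w i).2 = (w i).2 + δ := rfl

variable {K : Type*} [Field K] (a b c d t : K)

lemma letterVal_shiftW {N : ℕ} (r rN : ℕ) (δ : ℤ) (hδ : (rN:ℤ) = (r:ℤ) + δ)
    (w : Fin N → Bool × ℤ) (i : Fin N) :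
    letterVal a b c d t rN (shiftW δ w i) = letterVal a b c d t r (w i) := by
  simp only [letterVal, shiftW_fst, shiftW_snd]
  have : (rN:ℤ) - ((w i).2 + δ) = (r:ℤ) - (w i).2 := by omega
  rw [this]
  split_ifs with h <;> simp [h]

lemma shiftW_mem_down {r' m n : ℕ} {w : Fin (m+n) → Bool × ℤ}
    (hw : w ∈ wordSet (r'+1) m n) (h1 : ∀ h : 0 < m+n, 1 ≤ (w ⟨0,h⟩).2) :
    shiftW (-1) w ∈ wordSet r' m n := by
  obtain ⟨c1, c2, c3, c4⟩ := hw
  refine ⟨?_, ?_, ?_, ?_⟩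
  · intro h
    have := c1 h
    have := h1 h
    simp only [shiftW_snd]
    push_cast at this ⊢
    omega
  · exact c2
  · exact c3
  · intro i hi
    obtain ⟨d1, d2, d3⟩ := c4 i hi
    simp only [shiftW_fst, shiftW_snd]
    push_cast at d3 ⊢
    refine ⟨fun hb => ?_, fun hb => ?_, ?_⟩
    · have := d1 hb; omega
    · have := d2 hb; omega
    · omega

lemma shiftW_mem_up {r' m n : ℕ} {w : Fin (m+n) → Bool × ℤ}
    (hw : w ∈ wordSet r' m n) :
    shiftW 1 w ∈ wordSet (r'+1) m n ∧ ∀ h : 0 < m+n, 1 ≤ (shiftW 1 w ⟨0,h⟩).2 := by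
  obtain ⟨c1, c2, c3, c4⟩ := hw
  refine ⟨⟨?_, c2, c3, ?_⟩, ?_⟩
  · intro h
    have := c1 h
    simp only [shiftW_snd]
    push_cast
    omega
  · intro i hi
    obtain ⟨d1, d2, d3⟩ := c4 i hi
    simp only [shiftW_fst, shiftW_snd]
    push_cast
    refine ⟨fun hb => ?_, fun hb => ?_, ?_⟩
    · have := d1 hb; omega
    · have := d2 hb; omega
    · omega
  · intro h
    have := c1 h
    simp only [shiftW_snd]
    omega

lemma finsum_A (r' m n : ℕ) (h : 0 < m+n) :
    (∑ᶠ w ∈ {w ∈ wordSet (r'+1) m n | 1 ≤ (w ⟨0,h⟩).2},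
      ∏ i, letterVal a b c d t (r'+1) (w i))
    = ∑ᶠ w ∈ wordSet r' m n, ∏ i, letterVal a b c d t r' (w i) := by
  apply finsum_mem_eq_of_bijOn (shiftW (-1))
  · refine Set.InvOn.bijOn (f' := shiftW 1) ⟨?_, ?_⟩ ?_ ?_
    · intro w _
      funext i
      ext <;> simp [shiftW]
    · intro w _
      funext i
      ext <;> simp [shiftW]
    · intro w hw
      exact shiftW_mem_down hw.1 (fun _ => hw.2)
    · intro w hw
      exact ⟨(shiftW_mem_up hw).1, (shiftW_mem_up hw).2 h⟩
  · intro w hw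
    exact (Finset.prod_congr rfl (fun i _ =>
      (letterVal_shiftW a b c d t (r'+1) r' (-1) (by push_cast; ring) w i).symm))

lemma prod_split {M N : ℕ} {β : Type*} [CommMonoid β] (hNM : N = M + 1) (f : Fin N → β) :
    ∏ i, f i = f ⟨0, by omega⟩ * ∏ i : Fin M, f ⟨i.val+1, by omega⟩ := by
  subst hNM; rw [Fin.prod_univ_succ]; rfl

lemma card_filter_split {N M : ℕ} (hNM : N = M+1) (p : Fin N → Prop) [DecidablePred p] :
    (Finset.univ.filter p).card =
      (if p ⟨0, by omega⟩ then 1 else 0) +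
        (Finset.univ.filter (fun i : Fin M => p ⟨i.val+1, by omega⟩)).card := by
  subst hNM; rw [Finset.card_filter, Fin.sum_univ_succ, Finset.card_filter]; rfl

def tailW {N M : ℕ} (hNM : N = M+1) (δ : ℤ) (w : Fin N → Bool × ℤ) : Fin M → Bool × ℤ :=
  fun i => ((w ⟨i.val+1, by omega⟩).1, (w ⟨i.val+1, by omega⟩).2 + δ)

def consW {N M : ℕ} (hNM : N = M+1) (b0 : Bool) (δ : ℤ) (v : Fin M → Bool × ℤ) :
    Fin N → Bool × ℤ :=
  fun j => if hj : j.val = 0 then (b0, 0)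
    else ((v ⟨j.val-1, by omega⟩).1, (v ⟨j.val-1, by omega⟩).2 - δ)

@[simp] lemma tailW_fst {N M : ℕ} (hNM : N = M+1) (δ : ℤ) (w : Fin N → Bool × ℤ) (i : Fin M) :
    (tailW hNM δ w i).1 = (w ⟨i.val+1, by omega⟩).1 := rfl
@[simp] lemma tailW_snd {N M : ℕ} (hNM : N = M+1) (δ : ℤ) (w : Fin N → Bool × ℤ) (i : Fin M) :
    (tailW hNM δ w i).2 = (w ⟨i.val+1, by omega⟩).2 + δ := rfl

lemma consW_zero {N M : ℕ} (hNM : N = M+1) (b0 : Bool) (δ : ℤ) (v : Fin M → Bool × ℤ)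
    (h0 : 0 < N) : consW hNM b0 δ v ⟨0, h0⟩ = (b0, 0) := rfl

lemma consW_succ {N M : ℕ} (hNM : N = M+1) (b0 : Bool) (δ : ℤ) (v : Fin M → Bool × ℤ)
    (i : ℕ) (hi : i + 1 < N) :
    consW hNM b0 δ v ⟨i+1, hi⟩ = ((v ⟨i, by omega⟩).1, (v ⟨i, by omega⟩).2 - δ) := rfl

variable {K : Type*} [Field K] (a b c d t : K)

lemma letterVal_pair (r rN : ℕ) (δ : ℤ) (hδ : (rN:ℤ) = (r:ℤ) + δ) (X : Bool × ℤ) :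
    letterVal a b c d t rN (X.1, X.2 + δ) = letterVal a b c d t r X := by
  simp only [letterVal]
  have : (rN:ℤ) - (X.2 + δ) = (r:ℤ) - X.2 := by omega
  rw [this]

lemma tailW_mem (b0 : Bool) {r rN m n m' n' : ℕ} {δ : ℤ}
    (hδ : (rN:ℤ) = (r:ℤ) + δ) (hδb : δ = if b0 then 1 else 0)
    (hm : m = m' + (if b0 then 1 else 0)) (hn : n = n' + (if b0 then 0 else 1))
    (hNM : m + n = (m' + n') + 1)
    {w : Fin (m+n) → Bool × ℤ} (hw : w ∈ wordSet r m n)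
    (h : 0 < m+n) (h0 : (w ⟨0,h⟩).2 = 0) (hb : (w ⟨0,h⟩).1 = b0) :
    tailW hNM δ w ∈ wordSet rN m' n' := by
  obtain ⟨c1, c2, c3, c4⟩ := hw
  refine ⟨?_, ?_, ?_, ?_⟩
  · intro h'
    have h1 : 0 + 1 < m + n := by omega
    obtain ⟨d1, d2, d3⟩ := c4 0 h1
    simp only [tailW_fst, tailW_snd]
    rcases Bool.eq_false_or_eq_true b0 with hb0 | hb0 <;> subst hb0 <;>
      simp at hδb <;> subst hδb
    · have := d1 hb; constructor <;> omega
    · have := d2 hb; constructor <;> omega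
  · rw [card_filter_split hNM (fun i => (w i).1 = true)] at c2
    rw [hb] at c2
    have heq : (Finset.univ.filter (fun i : Fin (m'+n') => (tailW hNM δ w i).1 = true)).card
        = (Finset.univ.filter (fun i : Fin (m'+n') => (w ⟨i.val+1, by omega⟩).1 = true)).card := rfl
    rw [heq]
    rcases Bool.eq_false_or_eq_true b0 with hb0 | hb0 <;> subst hb0 <;>
      simp at hm c2 <;> omega
  · rw [card_filter_split hNM (fun i => (w i).1 = false)] at c3
    rw [hb] at c3
    have heq : (Finset.univ.filter (fun i : Fin (m'+n') => (tailW hNM δ w i).1 = false)).card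
        = (Finset.univ.filter (fun i : Fin (m'+n') => (w ⟨i.val+1, by omega⟩).1 = false)).card := rfl
    rw [heq]
    rcases Bool.eq_false_or_eq_true b0 with hb0 | hb0 <;> subst hb0 <;>
      simp at hn c3 <;> omega
  · intro i hi
    obtain ⟨d1, d2, d3⟩ := c4 (i+1) (by omega)
    simp only [tailW_fst, tailW_snd]
    refine ⟨fun hbt => ?_, fun hbt => ?_, by omega⟩
    · have := d1 hbt; omega
    · have := d2 hbt; omega

lemma consW_mem (b0 : Bool) {r rN m n m' n' : ℕ} {δ : ℤ}
    (hδ : (rN:ℤ) = (r:ℤ) + δ) (hδb : δ = if b0 then 1 else 0)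
    (hm : m = m' + (if b0 then 1 else 0)) (hn : n = n' + (if b0 then 0 else 1))
    (hNM : m + n = (m' + n') + 1)
    {v : Fin (m'+n') → Bool × ℤ} (hv : v ∈ wordSet rN m' n') (h : 0 < m+n) :
    consW hNM b0 δ v ∈ wordSet r m n ∧ (consW hNM b0 δ v ⟨0,h⟩).2 = 0 ∧
      (consW hNM b0 δ v ⟨0,h⟩).1 = b0 := by
  obtain ⟨c1, c2, c3, c4⟩ := hv
  refine ⟨⟨?_, ?_, ?_, ?_⟩, rfl, rfl⟩
  · intro h'
    rw [consW_zero]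
    exact ⟨le_rfl, Int.natCast_nonneg r⟩
  · rw [card_filter_split hNM (fun i => ((consW hNM b0 δ v) i).1 = true)]
    have heq : (Finset.univ.filter
        (fun i : Fin (m'+n') => (consW hNM b0 δ v ⟨i.val+1, by omega⟩).1 = true)).card
        = (Finset.univ.filter (fun i : Fin (m'+n') => (v i).1 = true)).card := rfl
    rw [heq, c2, consW_zero]
    cases b0 <;> simp at hm ⊢ <;> omega
  · rw [card_filter_split hNM (fun i => ((consW hNM b0 δ v) i).1 = false)]
    have heq : (Finset.univ.filter
        (fun i : Fin (m'+n') => (consW hNM b0 δ v ⟨i.val+1, by omega⟩).1 = false)).card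
        = (Finset.univ.filter (fun i : Fin (m'+n') => (v i).1 = false)).card := rfl
    rw [heq, c3, consW_zero]
    cases b0 <;> simp at hn ⊢ <;> omega
  · intro i hi
    cases i with
    | zero =>
      have h' : 0 < m' + n' := by omega
      have := c1 h'
      rw [consW_zero, consW_succ]
      have hv0 : v ⟨0, by omega⟩ = v ⟨0, h'⟩ := rfl
      rw [hv0]
      cases b0 <;> simp at hδb ⊢ <;> subst hδb <;>
        first
        | (refine ⟨?_, ?_⟩ <;> omega)
        | (refine ⟨?_, ?_, ?_⟩ <;> omega)
    | succ i' =>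
      have hi' : i' + 1 < m' + n' := by omega
      obtain ⟨d1, d2, d3⟩ := c4 i' hi'
      rw [consW_succ, consW_succ]
      have e1 : v ⟨i', by omega⟩ = v ⟨i', by omega⟩ := rfl
      refine ⟨fun hb' => ?_, fun hb' => ?_, by omega⟩
      · have := d1 hb'; omega
      · have := d2 hb'; omega

lemma finsum_B (b0 : Bool) (r rN m n m' n' : ℕ) (δ : ℤ)
    (hδ : (rN:ℤ) = (r:ℤ) + δ) (hδb : δ = if b0 then 1 else 0)
    (hm : m = m' + (if b0 then 1 else 0)) (hn : n = n' + (if b0 then 0 else 1))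
    (hNM : m + n = (m' + n') + 1) (h : 0 < m+n) :
    (∑ᶠ w ∈ {w ∈ wordSet r m n | (w ⟨0,h⟩).2 = 0 ∧ (w ⟨0,h⟩).1 = b0},
       ∏ i, letterVal a b c d t r (w i))
    = letterVal a b c d t r (b0, 0) *
       ∑ᶠ v ∈ wordSet rN m' n', ∏ i, letterVal a b c d t rN (v i) := by
  have key := finsum_mem_eq_of_bijOn (M := K)
    (f := fun w => ∏ i, letterVal a b c d t r (w i))
    (g := fun v => letterVal a b c d t r (b0, 0) * ∏ i, letterVal a b c d t rN (v i))
    (tailW hNM δ)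
    (s := {w ∈ wordSet r m n | (w ⟨0,h⟩).2 = 0 ∧ (w ⟨0,h⟩).1 = b0})
    (t := wordSet rN m' n')
    ?_ ?_
  · rw [key, ← Set.Finite.coe_toFinset (wordSet_finite rN m' n'), finsum_mem_coe_finset,
      finsum_mem_coe_finset, Finset.mul_sum]
  · refine Set.InvOn.bijOn (f' := consW hNM b0 δ) ⟨?_, ?_⟩ ?_ ?_
    · -- left inverse on B
      intro w hw
      obtain ⟨hw, h0, hb⟩ := hw
      funext j
      rcases j with ⟨jv, hj⟩
      cases jv with
      | zero =>
        rw [consW_zero]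
        have : w ⟨0, hj⟩ = w ⟨0, h⟩ := rfl
        rw [this]
        symm
        rw [Prod.ext_iff]
        exact ⟨hb, h0⟩
      | succ jv =>
        rw [consW_succ]
        simp [tailW]
    · -- right inverse on target
      intro v hv
      funext i
      simp only [tailW]
      rw [consW_succ]
      simp
    · intro w hw
      exact tailW_mem b0 hδ hδb hm hn hNM hw.1 h hw.2.1 hw.2.2
    · intro v hv
      have := consW_mem b0 hδ hδb hm hn hNM hv h
      exact ⟨this.1, this.2.1, this.2.2⟩
  · -- weights
    intro w hw
    obtain ⟨hwm, h0, hb⟩ := hw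
    show (∏ i, letterVal a b c d t r (w i)) =
      letterVal a b c d t r (b0, 0) * ∏ i, letterVal a b c d t rN (tailW hNM δ w i)
    rw [prod_split hNM (fun i => letterVal a b c d t r (w i))]
    have hw0 : w ⟨0, by omega⟩ = (b0, 0) := by
      rw [Prod.ext_iff]; exact ⟨hb, h0⟩
    rw [hw0]
    congr 1
    apply Finset.prod_congr rfl
    intro i _
    exact (letterVal_pair a b c d t r rN δ hδ (w ⟨i.val+1, by omega⟩)).symm

lemma A_empty (m n : ℕ) (h : 0 < m+n) :
    {w ∈ wordSet 0 m n | 1 ≤ (w ⟨0,h⟩).2} = ∅ := by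
  ext w
  simp only [Set.mem_setOf_eq, Set.mem_empty_iff_false, iff_false, not_and]
  intro hw h1
  have := (hw.1 h).2
  push_cast at this
  omega

lemma Bf_empty (r n : ℕ) (h : 0 < 0+n) :
    {w ∈ wordSet r 0 n | (w ⟨0,h⟩).2 = 0 ∧ (w ⟨0,h⟩).1 = true} = ∅ := by
  ext w
  simp only [Set.mem_setOf_eq, Set.mem_empty_iff_false, iff_false, not_and]
  intro hw _ hb
  have hc := hw.2.1
  rw [Finset.card_eq_zero] at hc
  exact (Finset.eq_empty_iff_forall_notMem.1 hc ⟨0,h⟩)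
    (Finset.mem_filter.2 ⟨Finset.mem_univ _, hb⟩)

lemma Bg_empty (r m : ℕ) (h : 0 < m+0) :
    {w ∈ wordSet r m 0 | (w ⟨0,h⟩).2 = 0 ∧ (w ⟨0,h⟩).1 = false} = ∅ := by
  ext w
  simp only [Set.mem_setOf_eq, Set.mem_empty_iff_false, iff_false, not_and]
  intro hw _ hb
  have hc := hw.2.2.1
  rw [Finset.card_eq_zero] at hc
  exact (Finset.eq_empty_iff_forall_notMem.1 hc ⟨0,h⟩)
    (Finset.mem_filter.2 ⟨Finset.mem_univ _, hb⟩)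

lemma finsum_split (r m n : ℕ) (h : 0 < m+n) (P : (Fin (m+n) → Bool × ℤ) → K) :
    (∑ᶠ w ∈ wordSet r m n, P w)
    = (∑ᶠ w ∈ {w ∈ wordSet r m n | 1 ≤ (w ⟨0,h⟩).2}, P w)
      + ((∑ᶠ w ∈ {w ∈ wordSet r m n | (w ⟨0,h⟩).2 = 0 ∧ (w ⟨0,h⟩).1 = true}, P w)
      + (∑ᶠ w ∈ {w ∈ wordSet r m n | (w ⟨0,h⟩).2 = 0 ∧ (w ⟨0,h⟩).1 = false}, P w)) := by
  have hfin := wordSet_finite r m n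
  have hA : {w ∈ wordSet r m n | 1 ≤ (w ⟨0,h⟩).2}.Finite := hfin.subset (Set.sep_subset _ _)
  have hBf : {w ∈ wordSet r m n | (w ⟨0,h⟩).2 = 0 ∧ (w ⟨0,h⟩).1 = true}.Finite :=
    hfin.subset (Set.sep_subset _ _)
  have hBg : {w ∈ wordSet r m n | (w ⟨0,h⟩).2 = 0 ∧ (w ⟨0,h⟩).1 = false}.Finite :=
    hfin.subset (Set.sep_subset _ _)
  have hu : wordSet r m n = {w ∈ wordSet r m n | 1 ≤ (w ⟨0,h⟩).2}
      ∪ ({w ∈ wordSet r m n | (w ⟨0,h⟩).2 = 0 ∧ (w ⟨0,h⟩).1 = true}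
      ∪ {w ∈ wordSet r m n | (w ⟨0,h⟩).2 = 0 ∧ (w ⟨0,h⟩).1 = false}) := by
    ext w
    simp only [Set.mem_union, Set.mem_setOf_eq]
    constructor
    · intro hw
      have h0 := (hw.1 h).1
      by_cases h1 : 1 ≤ (w ⟨0,h⟩).2
      · exact Or.inl ⟨hw, h1⟩
      · have h2 : (w ⟨0,h⟩).2 = 0 := by omega
        rcases Bool.eq_false_or_eq_true (w ⟨0,h⟩).1 with hb | hb
        · exact Or.inr (Or.inl ⟨hw, h2, hb⟩)
        · exact Or.inr (Or.inr ⟨hw, h2, hb⟩)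
    · rintro (⟨hw, _⟩ | ⟨hw, _⟩ | ⟨hw, _⟩) <;> exact hw
  have hd1 : Disjoint {w ∈ wordSet r m n | 1 ≤ (w ⟨0,h⟩).2}
      ({w ∈ wordSet r m n | (w ⟨0,h⟩).2 = 0 ∧ (w ⟨0,h⟩).1 = true}
      ∪ {w ∈ wordSet r m n | (w ⟨0,h⟩).2 = 0 ∧ (w ⟨0,h⟩).1 = false}) := by
    rw [Set.disjoint_left]
    rintro w ⟨_, h1⟩ (⟨_, h2, _⟩ | ⟨_, h2, _⟩) <;> omega
  have hd2 : Disjoint {w ∈ wordSet r m n | (w ⟨0,h⟩).2 = 0 ∧ (w ⟨0,h⟩).1 = true}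
      {w ∈ wordSet r m n | (w ⟨0,h⟩).2 = 0 ∧ (w ⟨0,h⟩).1 = false} := by
    rw [Set.disjoint_left]
    rintro w ⟨_, _, h1⟩ ⟨_, _, h2⟩
    rw [h1] at h2
    exact Bool.noConfusion h2
  conv_lhs => rw [hu]
  rw [finsum_mem_union hd1 hA (hBf.union hBg), finsum_mem_union hd2 hBf hBg]

def FW (a b c d t : K) (r m n : ℕ) : K :=
  ∑ᶠ w ∈ wordSet r m n, ∏ i, letterVal a b c d t r (w i)

lemma letterVal_true0 (r : ℕ) : letterVal a b c d t r (true, 0) = fF a b c d t (t^r) := by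
  simp [letterVal, zpow_natCast]

lemma letterVal_false0 (r : ℕ) : letterVal a b c d t r (false, 0) = gF a b c d t (t^r) := by
  simp [letterVal, zpow_natCast]

lemma FW_one (r : ℕ) : FW a b c d t r 0 0 = 1 := by
  have hmem : (fun i : Fin (0+0) => ((true : Bool), (0:ℤ))) ∈ wordSet r 0 0 := by
    refine ⟨fun h => absurd h (by omega), ?_, ?_, fun i hi => absurd hi (by omega)⟩ <;>
      simp [Finset.filter_eq_empty_iff]
  have hs : wordSet r 0 0 = {fun _ : Fin (0+0) => ((true : Bool), (0:ℤ))} := by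
    apply Set.eq_singleton_iff_unique_mem.2
    refine ⟨hmem, fun w _ => ?_⟩
    funext i
    exact absurd i.isLt (by omega)
  rw [FW, hs, finsum_mem_singleton]
  apply Finset.prod_eq_one
  intro i _
  exact absurd i.isLt (by omega)

lemma FW_rec (r m n : ℕ) (h : 0 < m + n) :
    FW a b c d t r m n =
      (if r = 0 then 0 else FW a b c d t (r-1) m n)
      + (if m = 0 then 0 else fF a b c d t (t^r) * FW a b c d t (r+1) (m-1) n)
      + (if n = 0 then 0 else gF a b c d t (t^r) * FW a b c d t r m (n-1)) := by
  rw [FW, finsum_split r m n h]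
  have eA : (∑ᶠ w ∈ {w ∈ wordSet r m n | 1 ≤ (w ⟨0,h⟩).2},
      ∏ i, letterVal a b c d t r (w i)) = (if r = 0 then 0 else FW a b c d t (r-1) m n) := by
    rcases r with _ | r'
    · rw [A_empty m n h, finsum_mem_empty, if_pos rfl]
    · rw [if_neg (Nat.succ_ne_zero r'), finsum_A a b c d t r' m n h]
      rfl
  have eB : (∑ᶠ w ∈ {w ∈ wordSet r m n | (w ⟨0,h⟩).2 = 0 ∧ (w ⟨0,h⟩).1 = true},
      ∏ i, letterVal a b c d t r (w i))
      = (if m = 0 then 0 else fF a b c d t (t^r) * FW a b c d t (r+1) (m-1) n) := by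
    rcases m with _ | m'
    · rw [Bf_empty r n h, finsum_mem_empty, if_pos rfl]
    · rw [if_neg (Nat.succ_ne_zero m'),
        finsum_B a b c d t true r (r+1) (m'+1) n m' n 1 (by push_cast; ring) (by simp)
          (by simp) (by simp) (by omega) h,
        letterVal_true0]
      rfl
  have eC : (∑ᶠ w ∈ {w ∈ wordSet r m n | (w ⟨0,h⟩).2 = 0 ∧ (w ⟨0,h⟩).1 = false},
      ∏ i, letterVal a b c d t r (w i))
      = (if n = 0 then 0 else gF a b c d t (t^r) * FW a b c d t r m (n-1)) := by
    rcases n with _ | n'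
    · rw [Bg_empty r m h, finsum_mem_empty, if_pos rfl]
    · rw [if_neg (Nat.succ_ne_zero n'),
        finsum_B a b c d t false r r m (n'+1) m n' 0 (by push_cast; ring) (by simp)
          (by simp) (by simp) (by omega) h,
        letterVal_false0]
      rfl
  rw [eA, eB, eC]
  ring

def SW (a b c d t : K) (r l : ℕ) : K :=
  ∑ m ∈ Finset.range (l+1), if 2*m ≤ l then FW a b c d t r m (l - 2*m) else 0

lemma SW_zero (r : ℕ) : SW a b c d t r 0 = 1 := by
  rw [SW]
  simp [FW_one]

lemma SW_rec (r l : ℕ) :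
    SW a b c d t r (l+1) =
      (if r = 0 then 0 else SW a b c d t (r-1) (l+1))
      + (if l = 0 then 0 else fF a b c d t (t^r) * SW a b c d t (r+1) (l-1))
      + gF a b c d t (t^r) * SW a b c d t r l := by
  have expand : ∀ m ∈ Finset.range (l+2),
      (if 2*m ≤ l+1 then FW a b c d t r m (l+1 - 2*m) else 0)
      = ((if 2*m ≤ l+1 then (if r = 0 then 0 else FW a b c d t (r-1) m (l+1-2*m)) else 0)
        + (if 2*m ≤ l+1 then (if m = 0 then 0
            else fF a b c d t (t^r) * FW a b c d t (r+1) (m-1) (l+1-2*m)) else 0)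
        + (if 2*m ≤ l+1 then (if l+1-2*m = 0 then 0
            else gF a b c d t (t^r) * FW a b c d t r m (l+1-2*m-1)) else 0)) := by
    intro m _
    by_cases hm : 2*m ≤ l+1
    · rw [if_pos hm, if_pos hm, if_pos hm, if_pos hm]
      exact FW_rec a b c d t r m (l+1-2*m) (by omega)
    · rw [if_neg hm, if_neg hm, if_neg hm, if_neg hm]
      ring
  have hsum : SW a b c d t r (l+1) = _ := Finset.sum_congr rfl expand
  rw [SW] at *
  rw [hsum, Finset.sum_add_distrib, Finset.sum_add_distrib]
  congr 1
  · congr 1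
    · -- A piece
      by_cases hr : r = 0
      · rw [if_pos hr]
        apply Finset.sum_eq_zero
        intro m _
        rw [hr]
        simp
      · rw [if_neg hr, SW]
        apply Finset.sum_congr rfl
        intro m _
        by_cases hm : 2*m ≤ l+1
        · rw [if_pos hm, if_pos hm, if_neg hr]
        · rw [if_neg hm, if_neg hm]
    · -- f piece
      rw [Finset.sum_range_succ']
      have hB0 : (if 2 * 0 ≤ l + 1 then if 0 = 0 then (0:K)
          else fF a b c d t (t ^ r) * FW a b c d t (r + 1) (0 - 1) (l + 1 - 2 * 0) else 0)
          = 0 := by simp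
      rw [hB0, add_zero]
      rcases l with _ | l'
      · rw [if_pos rfl]
        apply Finset.sum_eq_zero
        intro m _
        have : ¬ (2*(m+1) ≤ 0+1) := by omega
        rw [if_neg this]
      · rw [if_neg (Nat.succ_ne_zero l'), SW, Finset.mul_sum]
        rw [Finset.sum_range_succ]
        have hlast : (if 2*(l'+1+1) ≤ l'+1+1 then (if l'+1+1 = 0 then (0:K)
            else fF a b c d t (t^r) * FW a b c d t (r+1) (l'+1+1-1) (l'+1+1-2*(l'+1+1)))
            else 0) = 0 := by
          rw [if_neg (by omega)]
        rw [hlast, add_zero]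
        apply Finset.sum_congr rfl
        intro k _
        by_cases hk : 2*k ≤ l'
        · rw [if_pos (by omega : 2*(k+1) ≤ l'+1+1), if_neg (Nat.succ_ne_zero k),
            if_pos (by omega : 2*k ≤ l'+1-1)]
          have h1 : k + 1 - 1 = k := by omega
          have h2 : l'+1+1 - 2*(k+1) = l'+1-1 - 2*k := by omega
          rw [h1, h2]
        · rw [if_neg (by omega : ¬ 2*(k+1) ≤ l'+1+1), if_neg (by omega : ¬ 2*k ≤ l'+1-1)]
          ring
  · -- g piece
    rw [SW, Finset.mul_sum, Finset.sum_range_succ]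
    have hlast : (if 2*(l+1) ≤ l+1 then (if l+1-2*(l+1) = 0 then 0
        else gF a b c d t (t^r) * FW a b c d t r (l+1) (l+1-2*(l+1)-1)) else 0) = 0 := by
      rw [if_neg (by omega)]
    rw [hlast, add_zero]
    apply Finset.sum_congr rfl
    intro m _
    by_cases hm : 2*m ≤ l
    · rw [if_pos (by omega : 2*m ≤ l+1), if_neg (by omega : ¬ l+1-2*m = 0), if_pos hm]
      have h2 : l+1-2*m-1 = l - 2*m := by omega
      rw [h2]
    · rw [if_neg hm]
      by_cases hm1 : 2*m ≤ l+1
      · rw [if_pos hm1, if_pos (by omega : l+1-2*m = 0)]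
        ring
      · rw [if_neg hm1]
        ring

lemma C_eq_SW (C : ℕ → ℕ → K)
    (hC0 : ∀ i j : ℕ, j < i → C i j = 0)
    (hC1 : ∀ i : ℕ, C i i = 1)
    (hC2 : ∀ i j : ℕ, 1 ≤ j →
      C i j = (if i = 0 then 0 else C (i-1) (j-1)) +
        gF a b c d t (t^i) * C i (j-1) + fF a b c d t (t^i) * C (i+1) (j-1)) :
    ∀ l r : ℕ, C r (r + l) = SW a b c d t r l := by
  intro l
  induction l using Nat.strong_induction_on with
  | _ l ih =>
    rcases l with _ | l'
    · intro r
      rw [Nat.add_zero, hC1, SW_zero]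
    · intro r
      induction r with
      | zero =>
        rw [hC2 0 (0 + (l'+1)) (by omega), if_pos rfl, SW_rec, if_pos rfl]
        have e1 : 0 + (l'+1) - 1 = 0 + l' := by omega
        rw [e1, ih l' (by omega) 0]
        rcases l' with _ | l''
        · rw [hC0 1 (0+0) (by omega), if_pos rfl]
          ring
        · have e2 : 0 + (l''+1) = 1 + l'' := by omega
          rw [e2, ih l'' (by omega) 1, if_neg (Nat.succ_ne_zero l'')]
          have e3 : l'' + 1 - 1 = l'' := by omega
          rw [e3]
          ring
      | succ r' ihr =>
        rw [hC2 (r'+1) ((r'+1) + (l'+1)) (by omega), if_neg (Nat.succ_ne_zero r'),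
          SW_rec, if_neg (Nat.succ_ne_zero r')]
        have e0 : r' + 1 - 1 = r' := by omega
        have e1 : (r'+1) + (l'+1) - 1 = r' + (l'+1) := by omega
        rw [e0, e1, ihr]
        have e2 : r' + (l'+1) = (r'+1) + l' := by omega
        rw [e2, ih l' (by omega) (r'+1)]
        rcases l' with _ | l''
        · rw [hC0 (r'+1+1) ((r'+1)+0) (by omega), if_pos rfl]
          ring
        · have e3 : (r'+1) + (l''+1) = (r'+1+1) + l'' := by omega
          rw [e3, ih l'' (by omega) (r'+1+1), if_neg (Nat.succ_ne_zero l'')]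
          have e4 : l'' + 1 - 1 = l'' := by omega
          rw [e4]
          ring

lemma SW_even (r k : ℕ) :
    SW a b c d t r (2*k) = ∑ p ∈ Finset.HasAntidiagonal.antidiagonal k, FW a b c d t r p.1 (2*p.2) := by
  rw [Finset.Nat.sum_antidiagonal_eq_sum_range_succ_mk, SW]
  rw [← Finset.sum_subset (Finset.range_subset_range.2 (by omega : k+1 ≤ 2*k+1))
    (fun m _ hm => by rw [if_neg (by simp at hm ⊢; omega)])]
  apply Finset.sum_congr rfl
  intro m hm
  rw [Finset.mem_range] at hm
  rw [if_pos (by omega), show 2*k - 2*m = 2*(k-m) by omega]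

lemma SW_odd (r k : ℕ) :
    SW a b c d t r (2*k+1) = ∑ p ∈ Finset.HasAntidiagonal.antidiagonal k, FW a b c d t r p.1 (2*p.2+1) := by
  rw [Finset.Nat.sum_antidiagonal_eq_sum_range_succ_mk, SW]
  rw [← Finset.sum_subset (Finset.range_subset_range.2 (by omega : k+1 ≤ 2*k+1+1))
    (fun m _ hm => by rw [if_neg (by simp at hm ⊢; omega)])]
  apply Finset.sum_congr rfl
  intro m hm
  rw [Finset.mem_range] at hm
  rw [if_pos (by omega), show 2*k+1 - 2*m = 2*(k-m)+1 by omega]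


end AuxProof

/-- Combinatorial expression for the entries of the transition matrix `C`:
`C_{r,r+2k}` (resp. `C_{r,r+2k+1}`) is the sum over `k₁+k₂=k` of the total
weights of the words in `𝒫^{(r)}_{k₁,2k₂}` (resp. `𝒫^{(r)}_{k₁,2k₂+1}`). -/
theorem C_combinatorial_formula {K : Type*} [Field K] (a b c d t : K)
    (ht : t ≠ 0) (h1t : (1:K) - t ≠ 0)
    (hgen : ∀ m : ℤ,
      (1 - a*b*c*d*t^(2*m)/t) ≠ 0 ∧ (1 - a*b*c*d*t^(2*m)) ≠ 0 ∧
      (1 - a*b*c*d*t*t^(2*m)) ≠ 0 ∧ (1 - a*b*c*d*t^(2*m)/t^2) ≠ 0)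
    (C : ℕ → ℕ → K)
    (hC0 : ∀ i j : ℕ, j < i → C i j = 0)
    (hC1 : ∀ i : ℕ, C i i = 1)
    (hC2 : ∀ i j : ℕ, 1 ≤ j →
      C i j = (if i = 0 then 0 else C (i-1) (j-1)) +
        gF a b c d t (t^i) * C i (j-1) + fF a b c d t (t^i) * C (i+1) (j-1))
    (r k : ℕ) :
    C r (r + 2*k) =
      (∑ p ∈ Finset.HasAntidiagonal.antidiagonal k,
        ∑ᶠ w ∈ wordSet r p.1 (2*p.2), ∏ i, letterVal a b c d t r (w i)) ∧
    C r (r + 2*k + 1) =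
      (∑ p ∈ Finset.HasAntidiagonal.antidiagonal k,
        ∑ᶠ w ∈ wordSet r p.1 (2*p.2 + 1), ∏ i, letterVal a b c d t r (w i)) := by
  constructor
  · rw [C_eq_SW a b c d t C hC0 hC1 hC2 (2*k) r, SW_even]
    rfl
  · rw [show r + 2*k + 1 = r + (2*k+1) by omega,
      C_eq_SW a b c d t C hC0 hC1 hC2 (2*k+1) r, SW_odd]
    rfl

end
end
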